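/- Let k ≥ 1 be an integer, let χ = [0, 2k] × [0, 2k] ⊆ ℝ², and let Q be a finite set of points in ℝ² such that every point of Q ∩ χ has some other point of Q at Euclidean distance at most 1 from it. Then there exists a subset T ⊆ Q with |T| ≤ 2·⌈2√2·k⌉² such that every point p ∈ Q ∩ χ has some point t ∈ T with t ≠ p and dist(p, t) ≤ 1. -/

import Mathlib

open scoped Classical

/-- For an integer `k ≥ 1` and the square `χ = [0, 2k] × [0, 2k]`, if `Q` is a
finite planar point set such that every point of `Q ∩ χ` has another point of `Q` at
distance at most 1, then some `T ⊆ Q` with `|T| ≤ 2·⌈2√2·k⌉²` totally dominates all points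
of `Q ∩ χ` in the unit disk graph sense. -/
theorem exists_small_tds_for_square
    (k : ℕ) (hk : 1 ≤ k) (Q : Finset (EuclideanSpace ℝ (Fin 2)))
    (hNoIso : ∀ p ∈ Q,
      (p 0 ∈ Set.Icc (0 : ℝ) (2 * k) ∧ p 1 ∈ Set.Icc (0 : ℝ) (2 * k)) →
      ∃ q ∈ Q, q ≠ p ∧ dist p q ≤ 1) :
    ∃ T ⊆ Q, T.card ≤ 2 * (⌈2 * Real.sqrt 2 * k⌉₊) ^ 2 ∧
      ∀ p ∈ Q,
        (p 0 ∈ Set.Icc (0 : ℝ) (2 * k) ∧ p 1 ∈ Set.Icc (0 : ℝ) (2 * k)) →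
        ∃ t ∈ T, t ≠ p ∧ dist p t ≤ 1 := by
  set N : ℕ := ⌈2 * Real.sqrt 2 * k⌉₊ with hNdef
  have hk1 : (1 : ℝ) ≤ (k : ℝ) := by exact_mod_cast hk
  have hsqrt2 : (0:ℝ) < Real.sqrt 2 := Real.sqrt_pos.2 (by norm_num)
  have hNpos : 0 < N := Nat.ceil_pos.2 (by positivity)
  have hNR : (0:ℝ) < (N : ℝ) := by exact_mod_cast hNpos
  set δ : ℝ := 2 * k / N with hδdef
  have hδpos : 0 < δ := by positivity
  have hNδ : (N : ℝ) * δ = 2 * k := by rw [hδdef]; field_simp [hNR.ne']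
  have hceil : 2 * Real.sqrt 2 * k ≤ (N : ℝ) := Nat.le_ceil _
  have hδle : Real.sqrt 2 * δ ≤ 1 := by
    rw [hδdef, mul_div_assoc']
    rw [div_le_one hNR]
    calc Real.sqrt 2 * (2 * k) = 2 * Real.sqrt 2 * k := by ring
    _ ≤ (N : ℝ) := hceil
  -- cell index function
  set idx : ℝ → ℕ := fun x => min ⌊x / δ⌋₊ (N - 1) with hidx
  have hidx_lt : ∀ x, idx x < N := fun x =>
    lt_of_le_of_lt (min_le_right _ _) (Nat.sub_lt hNpos one_pos)
  have hidx_mem : ∀ x : ℝ, 0 ≤ x → x ≤ 2 * k →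
      (idx x : ℝ) * δ ≤ x ∧ x ≤ ((idx x : ℝ) + 1) * δ := by
    intro x hx0 hx2
    have hxd : 0 ≤ x / δ := by positivity
    by_cases h : ⌊x / δ⌋₊ ≤ N - 1
    · have hi : idx x = ⌊x / δ⌋₊ := min_eq_left h
      constructor
      · rw [hi]
        have := Nat.floor_le hxd
        calc (⌊x / δ⌋₊ : ℝ) * δ ≤ x / δ * δ := by
              exact mul_le_mul_of_nonneg_right this hδpos.le
        _ = x := by field_simp
      · rw [hi]
        have := (Nat.lt_floor_add_one (x / δ)).le
        calc x = x / δ * δ := by field_simp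
        _ ≤ ((⌊x / δ⌋₊ : ℝ) + 1) * δ := mul_le_mul_of_nonneg_right this hδpos.le
    · push_neg at h
      have hNle : N ≤ ⌊x / δ⌋₊ := by omega
      have hi : idx x = N - 1 := min_eq_right (by omega)
      have hN1 : ((N - 1 : ℕ) : ℝ) = (N : ℝ) - 1 := by
        have : (1:ℕ) ≤ N := hNpos
        push_cast [Nat.cast_sub this]
        ring
      constructor
      · rw [hi, hN1]
        have h1 : (N : ℝ) ≤ x / δ := le_trans (by exact_mod_cast hNle) (Nat.floor_le hxd)
        have h2 : (N : ℝ) * δ ≤ x := by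
          calc (N : ℝ) * δ ≤ x / δ * δ := mul_le_mul_of_nonneg_right h1 hδpos.le
          _ = x := by field_simp
        nlinarith
      · rw [hi, hN1]
        have : ((N:ℝ) - 1 + 1) * δ = (N:ℝ) * δ := by ring
        rw [this, hNδ]; exact hx2
  -- distance bound within a cell
  have hsame : ∀ p p' : EuclideanSpace ℝ (Fin 2),
      (p 0 ∈ Set.Icc (0 : ℝ) (2 * k) ∧ p 1 ∈ Set.Icc (0 : ℝ) (2 * k)) →
      (p' 0 ∈ Set.Icc (0 : ℝ) (2 * k) ∧ p' 1 ∈ Set.Icc (0 : ℝ) (2 * k)) →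
      idx (p 0) = idx (p' 0) → idx (p 1) = idx (p' 1) → dist p p' ≤ 1 := by
    intro p p' hp hp' h0 h1
    have key : ∀ j : Fin 2, dist (p j) (p' j) ≤ δ := by
      intro j
      have hj : idx (p j) = idx (p' j) ∧ (p j ∈ Set.Icc (0:ℝ) (2*k))
          ∧ (p' j ∈ Set.Icc (0:ℝ) (2*k)) := by
        fin_cases j <;> exact ⟨by assumption, by tauto, by tauto⟩
      obtain ⟨he, ⟨ha0, ha2⟩, ⟨hb0, hb2⟩⟩ := hj
      obtain ⟨hA1, hA2⟩ := hidx_mem (p j) ha0 ha2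
      obtain ⟨hB1, hB2⟩ := hidx_mem (p' j) hb0 hb2
      rw [he] at hA1 hA2
      rw [Real.dist_eq, abs_le]
      constructor <;> nlinarith
    have : dist p p' ≤ Real.sqrt 2 * δ := by
      rw [EuclideanSpace.dist_eq]
      have hsum : ∑ i : Fin 2, dist (p i) (p' i) ^ 2 ≤ 2 * δ ^ 2 := by
        rw [Fin.sum_univ_two]
        have h0' := key 0
        have h1' := key 1
        have d0 : (0:ℝ) ≤ dist (p 0) (p' 0) := dist_nonneg
        have d1 : (0:ℝ) ≤ dist (p 1) (p' 1) := dist_nonneg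
        nlinarith
      calc Real.sqrt (∑ i : Fin 2, dist (p i) (p' i) ^ 2)
          ≤ Real.sqrt (2 * δ ^ 2) := Real.sqrt_le_sqrt hsum
        _ = Real.sqrt 2 * δ := by
            rw [Real.sqrt_mul (by norm_num)]
            rw [Real.sqrt_sq hδpos.le]
    linarith
  -- the set S of points of Q in the square
  set inχ : EuclideanSpace ℝ (Fin 2) → Prop := fun p =>
    p 0 ∈ Set.Icc (0 : ℝ) (2 * k) ∧ p 1 ∈ Set.Icc (0 : ℝ) (2 * k) with hinχ
  set S : Finset (EuclideanSpace ℝ (Fin 2)) := Q.filter inχ with hS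
  set g : EuclideanSpace ℝ (Fin 2) → ℕ × ℕ := fun p => (idx (p 0), idx (p 1)) with hg
  -- representative and mate
  set rep : ℕ × ℕ → EuclideanSpace ℝ (Fin 2) := fun c =>
    if h : ∃ p ∈ S, g p = c then h.choose else 0 with hrep
  set mate : EuclideanSpace ℝ (Fin 2) → EuclideanSpace ℝ (Fin 2) := fun p =>
    if h : ∃ q ∈ Q, q ≠ p ∧ dist p q ≤ 1 then h.choose else p with hmate
  have hrep_spec : ∀ c ∈ S.image g, rep c ∈ S ∧ g (rep c) = c := by
    intro c hc
    obtain ⟨p, hp, hgp⟩ := Finset.mem_image.1 hc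
    have h : ∃ p ∈ S, g p = c := ⟨p, hp, hgp⟩
    simp only [hrep, dif_pos h]
    exact ⟨h.choose_spec.1, h.choose_spec.2⟩
  have hmate_spec : ∀ p ∈ S, mate p ∈ Q ∧ mate p ≠ p ∧ dist p (mate p) ≤ 1 := by
    intro p hp
    rw [hS, Finset.mem_filter] at hp
    have h : ∃ q ∈ Q, q ≠ p ∧ dist p q ≤ 1 := hNoIso p hp.1 hp.2
    simp only [hmate, dif_pos h]
    exact ⟨h.choose_spec.1, h.choose_spec.2.1, h.choose_spec.2.2⟩
  set T : Finset (EuclideanSpace ℝ (Fin 2)) :=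
    (S.image g).biUnion (fun c => {rep c, mate (rep c)}) with hT
  have hTQ : T ⊆ Q := by
    intro t ht
    rw [hT, Finset.mem_biUnion] at ht
    obtain ⟨c, hc, htc⟩ := ht
    obtain ⟨hrS, _⟩ := hrep_spec c hc
    have hrQ : rep c ∈ Q := (Finset.mem_filter.1 hrS).1
    have hmQ : mate (rep c) ∈ Q := (hmate_spec _ hrS).1
    rcases Finset.mem_insert.1 htc with h | h
    · exact h ▸ hrQ
    · exact (Finset.mem_singleton.1 h) ▸ hmQ
  refine ⟨T, hTQ, ?_, ?_⟩
  · -- cardinality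
    have h1 : T.card ≤ (S.image g).card * 2 := by
      rw [hT]
      calc ((S.image g).biUnion (fun c => {rep c, mate (rep c)})).card
          ≤ ∑ c ∈ S.image g, ({rep c, mate (rep c)} : Finset _).card :=
            Finset.card_biUnion_le
        _ ≤ ∑ _c ∈ S.image g, 2 := by
            apply Finset.sum_le_sum
            intro c _
            exact le_trans (Finset.card_insert_le _ _) (by simp)
        _ = (S.image g).card * 2 := by rw [Finset.sum_const, smul_eq_mul]
    have h2 : (S.image g) ⊆ Finset.range N ×ˢ Finset.range N := by
      intro c hc
      obtain ⟨p, _, hgp⟩ := Finset.mem_image.1 hc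
      rw [Finset.mem_product, Finset.mem_range, Finset.mem_range, ← hgp]
      exact ⟨hidx_lt _, hidx_lt _⟩
    have h3 : (S.image g).card ≤ N ^ 2 := by
      calc (S.image g).card ≤ (Finset.range N ×ˢ Finset.range N).card :=
            Finset.card_le_card h2
        _ = N ^ 2 := by rw [Finset.card_product, Finset.card_range]; ring
    calc T.card ≤ (S.image g).card * 2 := h1
      _ ≤ N ^ 2 * 2 := by omega
      _ = 2 * N ^ 2 := by ring
  · -- domination
    intro p hpQ hpχ
    have hpS : p ∈ S := Finset.mem_filter.2 ⟨hpQ, hpχ⟩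
    have hc : g p ∈ S.image g := Finset.mem_image_of_mem g hpS
    obtain ⟨hrS, hgr⟩ := hrep_spec (g p) hc
    by_cases h : rep (g p) = p
    · refine ⟨mate (rep (g p)), ?_, ?_, ?_⟩
      · rw [hT, Finset.mem_biUnion]
        exact ⟨g p, hc, by simp⟩
      · rw [h]; exact (hmate_spec p hpS).2.1
      · rw [h]
        have := (hmate_spec p hpS).2.2
        exact this
    · refine ⟨rep (g p), ?_, h, ?_⟩
      · rw [hT, Finset.mem_biUnion]
        exact ⟨g p, hc, by simp⟩
      · have hrχ : inχ (rep (g p)) := (Finset.mem_filter.1 hrS).2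
        have hg0 : idx (p 0) = idx ((rep (g p)) 0) := by
          have := congrArg Prod.fst hgr
          simp only [hg] at this ⊢
          exact this.symm
        have hg1 : idx (p 1) = idx ((rep (g p)) 1) := by
          have := congrArg Prod.snd hgr
          simp only [hg] at this ⊢
          exact this.symm
        exact hsame p (rep (g p)) hpχ hrχ hg0 hg1
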